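/- Let X* have support coordinate i₀ with x*_{i₀} > 0, ‖x*‖₂ = 1, and initialize X(0) by X_{i₀}(0) = θ̂/√3 with θ̂ ∈ [√(1 − 9√(log n/m)), √(1 + 9√(log n/m))] and X_i(0) = 0 otherwise. Then the initial Bregman divergence of the hypentropy map satisfies D_Φ(x*, X(0)) ≤ ‖x*‖₁ · log(1/β) + 1. -/

import Mathlib

open Finset

lemma ibb_log_le_half (t : ℝ) (ht : 1 ≤ t) : Real.log t ≤ t/2 - 1/(2*t) := by
  have h0 : ∀ x : ℝ, 0 < x → HasDerivAt (fun y : ℝ => y/2 - 1/(2*y) - Real.log y)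
      ((x-1)^2/(2*x^2)) x := by
    intro x hx
    have h1 : HasDerivAt (fun y : ℝ => y/2) (1/2) x := (hasDerivAt_id x).div_const 2
    have h2 : HasDerivAt (fun y : ℝ => 2*y) 2 x := by
      simpa using (hasDerivAt_id x).const_mul 2
    have h3 : HasDerivAt (fun y : ℝ => 1/(2*y)) (-2/(2*x)^2) x := by
      simpa [one_div, Pi.inv_def] using h2.inv (by positivity)
    have h4 := Real.hasDerivAt_log (ne_of_gt hx)
    have h5 := (h1.sub h3).sub h4
    refine h5.congr_deriv ?_
    field_simp
    ring
  have mono : MonotoneOn (fun y : ℝ => y/2 - 1/(2*y) - Real.log y) (Set.Ici 1) := by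
    apply monotoneOn_of_deriv_nonneg (convex_Ici 1)
    · intro x hx
      exact (h0 x (lt_of_lt_of_le one_pos hx)).differentiableAt.continuousAt.continuousWithinAt
    · intro x hx
      rw [interior_Ici] at hx
      exact (h0 x (lt_trans one_pos hx)).differentiableAt.differentiableWithinAt
    · intro x hx
      rw [interior_Ici] at hx
      rw [(h0 x (lt_trans one_pos hx)).deriv]
      positivity
  have h6 := mono Set.self_mem_Ici (Set.mem_Ici.2 ht) ht
  simp only [Real.log_one] at h6
  norm_num at h6
  have h7 : 1/(2*t) = t⁻¹ * (1/2) := by ring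
  rw [h7]
  linarith

lemma ibb_coreA (β u : ℝ) (hβ0 : 0 < β) (hβ1 : β ≤ 1) (hu0 : 0 ≤ u) (hu1 : u ≤ 1) :
    u * Real.log (u + Real.sqrt (u^2 + β^2)) + β - Real.sqrt (u^2+β^2)
      ≤ u^2 - (1-β)*u := by
  set s := Real.sqrt (u^2+β^2) with hs
  have hs0 : 0 ≤ s := Real.sqrt_nonneg _
  have hsβ : β ≤ s := by
    rw [hs, show u^2+β^2 = β^2 + u^2 by ring]
    calc β = Real.sqrt (β^2) := (Real.sqrt_sq hβ0.le).symm
    _ ≤ _ := Real.sqrt_le_sqrt (by nlinarith)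
  have ht : 0 < u + s := by linarith
  have hlog : Real.log (u+s) ≤ (u+s) - 1 := Real.log_le_sub_one_of_pos ht
  have hmul : u * Real.log (u+s) ≤ u*((u+s)-1) := mul_le_mul_of_nonneg_left hlog hu0
  nlinarith [mul_nonneg (sub_nonneg.2 hu1) (sub_nonneg.2 hsβ)]

set_option maxHeartbeats 1000000 in
lemma ibb_coreB (β u : ℝ) (hβ0 : 0 < β) (hβ1 : β ≤ 1) (hβ3 : 1/3 ≤ β^2)
    (hu0 : 0 ≤ u) (hu1 : u ≤ 1) :
    u * Real.log (u + Real.sqrt (u^2 + β^2)) + β - Real.sqrt (u^2+β^2)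
      ≤ u^2 * (Real.sqrt 3 / 3) := by
  set c : ℝ := Real.sqrt 3 / 3 with hcdef
  have hc2 : c^2 = 1/3 := by
    rw [hcdef, div_pow, Real.sq_sqrt (by norm_num : (0:ℝ) ≤ 3)]
    norm_num
  have hc0 : 0 < c := by positivity
  have hclb : (577:ℝ)/1000 ≤ c := by nlinarith
  have hcub : c ≤ (578:ℝ)/1000 := by nlinarith
  have hβc : c ≤ β := by nlinarith
  set s := Real.sqrt (u^2+β^2) with hs
  have hs0 : 0 ≤ s := Real.sqrt_nonneg _
  have hs2 : s^2 = u^2 + β^2 := Real.sq_sqrt (by positivity)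
  have hsβ : β ≤ s := by
    rw [hs, show u^2+β^2 = β^2 + u^2 by ring]
    calc β = Real.sqrt (β^2) := (Real.sqrt_sq hβ0.le).symm
    _ ≤ _ := Real.sqrt_le_sqrt (by nlinarith)
  have hsu : u ≤ s := by
    rw [hs]
    calc u = Real.sqrt (u^2) := (Real.sqrt_sq hu0).symm
    _ ≤ _ := Real.sqrt_le_sqrt (by nlinarith)
  have hs32 : s ≤ 3/2 := by nlinarith
  have hsq1 : 0 ≤ (u+s)^2-β^2 := by nlinarith
  rcases le_or_gt (u+s) 1 with hts | hts
  · have hlog : Real.log (u+s) ≤ 0 := Real.log_nonpos (by linarith) hts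
    have h1 : u * Real.log (u+s) ≤ 0 := mul_nonpos_of_nonneg_of_nonpos hu0 hlog
    nlinarith
  have ht0 : (0:ℝ) < u + s := by linarith
  rcases le_or_gt (u+s) (163/100) with hcase | hcase
  · -- quadratic log bound region
    have hlog : Real.log (u+s) ≤ (u+s)/2 - 1/(2*(u+s)) := ibb_log_le_half _ hts.le
    have hK4 : 0 ≤ 4*c*(c*((u+s)+β)^2 - ((u+s)+1)*((u+s)+β) + 2*(u+s)) := by
      nlinarith [sq_nonneg (2*c*((u+s)+β) - ((u+s)+1)),
        mul_nonneg (sub_nonneg.2 hts.le) (sub_nonneg.2 hcase),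
        mul_nonneg (sub_nonneg.2 hcase) (sub_nonneg.2 (by linarith : 8*c ≤ 463/100))]
    have hK : 0 ≤ c*((u+s)+β)^2 - ((u+s)+1)*((u+s)+β) + 2*(u+s) :=
      (mul_nonneg_iff_of_pos_left (by positivity : (0:ℝ) < 4*c)).mp hK4
    have hid : 2*(u+s)*(s+β)*(2*c*u^2*(u+s) - u*((u+s)^2-1) - 2*(β-s)*(u+s))
        = u*((u+s)^2-β^2)*(c*((u+s)+β)^2 - ((u+s)+1)*((u+s)+β) + 2*(u+s))
          + u*((u+s)+β)^2*((u+s)+1)*(1-β) := by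
      linear_combination (-u*s^2 + 4*s^2 - u*s^2*c - 2*u^2*s + 6*u*s - 2*u*s*β*c
        + u^3*c + 2*u^2 + u - 2*u^2*β*c - u^3 - u*β^2*c) * hs2
    have hG : 0 ≤ 2*c*u^2*(u+s) - u*((u+s)^2-1) - 2*(β-s)*(u+s) := by
      have hpos : (0:ℝ) < 2*(u+s)*(s+β) := by positivity
      have hrhs : 0 ≤ u*((u+s)^2-β^2)*(c*((u+s)+β)^2 - ((u+s)+1)*((u+s)+β) + 2*(u+s))
          + u*((u+s)+β)^2*((u+s)+1)*(1-β) := by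
        have h1 := hsq1
        have h2 : 0 ≤ (1:ℝ)-β := by linarith
        have h3 : 0 ≤ ((u+s)+β)^2 := sq_nonneg _
        positivity
      exact (mul_nonneg_iff_of_pos_left hpos).mp (hid ▸ hrhs)
    have h9 : u*((u+s)/2 - 1/(2*(u+s))) + β - s ≤ u^2*c := by
      rw [show u*((u+s)/2 - 1/(2*(u+s))) + β - s
          = (u*((u+s)^2-1) + 2*(β-s)*(u+s))/(2*(u+s)) from by field_simp; ring]
      rw [div_le_iff₀ (by positivity)]
      nlinarith [hG]
    have hmul : u * Real.log (u+s) ≤ u*((u+s)/2 - 1/(2*(u+s))) :=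
      mul_le_mul_of_nonneg_left hlog hu0
    linarith
  · -- linear log bound region
    have hlog : Real.log (u+s) ≤ (u+s)/2 - 3068/10000 := by
      have h2 : Real.log (u+s) = Real.log 2 + Real.log ((u+s)/2) := by
        conv_lhs => rw [show u+s = 2*((u+s)/2) from by ring]
        rw [Real.log_mul (by norm_num) (by positivity)]
      have h3 : Real.log ((u+s)/2) ≤ (u+s)/2 - 1 := Real.log_le_sub_one_of_pos (by positivity)
      have h4 := Real.log_two_lt_d9
      rw [h2]
      norm_num at h4 ⊢
      linarith
    have hq : 0 ≤ 1 - β := by linarith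
    have hq2 : 0 ≤ β - 577/1000 := by linarith
    have hp1 : 0 ≤ (u+s) - 163/100 := by linarith
    have hp2 : 0 ≤ 5/2 - (u+s) := by linarith
    have htβ : 0 ≤ (u+s) - β := by linarith
    have hA : 0 ≤ (c - 577/1000) * (((u+s)-β) * ((u+s)+β)^2) :=
      mul_nonneg (by linarith) (mul_nonneg htβ (sq_nonneg _))
    have hM : 0 ≤ c*((u+s)-β)*((u+s)+β)^2 + 2*(u+s)*((u+s)-β)
        + (u+s)*(6136/10000 - (u+s))*((u+s)+β) := by
      nlinarith [hA, mul_nonneg (mul_nonneg hp1 hp1) hp2,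
        mul_nonneg (mul_nonneg hp1 hq) hq2,
        mul_nonneg (mul_nonneg hq hq) hq2,
        mul_nonneg (mul_nonneg hp1 hp1) hq,
        mul_nonneg (mul_nonneg hq hq) hq,
        mul_nonneg hp1 hp2, mul_nonneg hq hq2, mul_nonneg hp1 hq]
    have hid2 : 2*(u+s)*((u+s)+β)*(c*u^2 - u*((u+s)/2 - 3068/10000) - (β - s))
        = u*(c*((u+s)-β)*((u+s)+β)^2 + 2*(u+s)*((u+s)-β)
          + (u+s)*(6136/10000 - (u+s))*((u+s)+β)) := by
      linear_combination (2*s - u*s*c + 2*u - u^2*c - u*β*c) * hs2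
    have hG2 : 0 ≤ c*u^2 - u*((u+s)/2 - 3068/10000) - (β - s) := by
      have hpos : (0:ℝ) < 2*(u+s)*((u+s)+β) := by positivity
      exact (mul_nonneg_iff_of_pos_left hpos).mp (hid2 ▸ (mul_nonneg hu0 hM))
    have hmul : u * Real.log (u+s) ≤ u*((u+s)/2 - 3068/10000) :=
      mul_le_mul_of_nonneg_left hlog hu0
    linarith

lemma ibb_sqrt_div (β x : ℝ) (hβ0 : 0 < β) :
    Real.sqrt (1 + (x/β)^2) = Real.sqrt (x^2 + β^2) / β := by
  rw [eq_div_iff hβ0.ne', ← Real.sqrt_sq hβ0.le, ← Real.sqrt_mul (by positivity)]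
  rw [Real.sqrt_sq hβ0.le]
  congr 1
  field_simp
  ring

lemma ibb_arsinh_eq (β x : ℝ) (hβ0 : 0 < β) (hx : 0 ≤ x) :
    Real.arsinh (x/β) = Real.log (x + Real.sqrt (x^2 + β^2)) + Real.log (1/β) := by
  have hsβ : β ≤ Real.sqrt (x^2 + β^2) := by
    rw [show x^2+β^2 = β^2 + x^2 by ring]
    calc β = Real.sqrt (β^2) := (Real.sqrt_sq hβ0.le).symm
    _ ≤ _ := Real.sqrt_le_sqrt (by nlinarith)
  have hpos : 0 < x + Real.sqrt (x^2 + β^2) := by linarith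
  rw [Real.arsinh, ibb_sqrt_div β x hβ0, ← add_div, Real.log_div hpos.ne' hβ0.ne']
  rw [one_div, Real.log_inv]
  ring

lemma ibb_hasDerivAt (β : ℝ) (hβ0 : 0 < β) (t : ℝ) :
    HasDerivAt (fun t : ℝ => t * Real.arsinh (t / β) - Real.sqrt (t^2 + β^2))
      (Real.arsinh (t/β)) t := by
  have h1 : HasDerivAt (fun t : ℝ => t/β) (1/β) t := (hasDerivAt_id t).div_const β
  have h2 : HasDerivAt (fun t : ℝ => Real.arsinh (t/β))
      ((Real.sqrt (1 + (t/β)^2))⁻¹ * (1/β)) t := HasDerivAt.comp (h₂ := Real.arsinh) t (Real.hasDerivAt_arsinh (t/β)) h1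
  have h3 : HasDerivAt (fun t : ℝ => t * Real.arsinh (t/β))
      (1 * Real.arsinh (t/β) + t * ((Real.sqrt (1 + (t/β)^2))⁻¹ * (1/β))) t :=
    (hasDerivAt_id t).mul h2
  have h4 : HasDerivAt (fun t : ℝ => t^2 + β^2) (2*t) t := by
    simpa using (hasDerivAt_pow 2 t).add_const (β^2)
  have h5 : HasDerivAt (fun t : ℝ => Real.sqrt (t^2 + β^2))
      (2*t / (2 * Real.sqrt (t^2+β^2))) t := h4.sqrt (by positivity)
  have h6 := h3.sub h5
  refine h6.congr_deriv ?_
  rw [ibb_sqrt_div β t hβ0]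
  have hpos : 0 < Real.sqrt (t^2+β^2) := Real.sqrt_pos.2 (by positivity)
  field_simp
  ring

lemma ibb_abs_rw (β x : ℝ) (hβ0 : 0 < β) :
    x * Real.arsinh (x/β) = |x| * Real.arsinh (|x|/β) := by
  rcases abs_cases x with ⟨h1,h2⟩|⟨h1,h2⟩
  · rw [h1]
  · rw [h1, neg_div, Real.arsinh_neg]; ring

lemma ibb_boundA (β x : ℝ) (hβ0 : 0 < β) (hβ1 : β ≤ 1) (hx : |x| ≤ 1) :
    x * Real.arsinh (x/β) - Real.sqrt (x^2+β^2) + β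
      ≤ |x| * Real.log (1/β) + (x^2 - (1-β)*|x|) := by
  have hu0 : 0 ≤ |x| := abs_nonneg x
  have hA := ibb_coreA β |x| hβ0 hβ1 hu0 hx
  rw [ibb_abs_rw β x hβ0, show x^2 = |x|^2 from (sq_abs x).symm,
    ibb_arsinh_eq β |x| hβ0 hu0, mul_add]
  linarith

lemma ibb_boundB (β x : ℝ) (hβ0 : 0 < β) (hβ1 : β ≤ 1) (hβ3 : 1/3 ≤ β^2) (hx : |x| ≤ 1) :
    x * Real.arsinh (x/β) - Real.sqrt (x^2+β^2) + β
      ≤ |x| * Real.log (1/β) + x^2 * (Real.sqrt 3 / 3) := by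
  have hu0 : 0 ≤ |x| := abs_nonneg x
  have hB := ibb_coreB β |x| hβ0 hβ1 hβ3 hu0 hx
  rw [ibb_abs_rw β x hβ0, show x^2 = |x|^2 from (sq_abs x).symm,
    ibb_arsinh_eq β |x| hβ0 hu0, mul_add]
  linarith

set_option maxHeartbeats 1000000 in
/-- Bound on the initial Bregman divergence of the hypentropy mirror map under
the sparse initialization. -/
theorem initial_bregman_bound (n m : ℕ) (hn : 1 ≤ n) (hm : 1 ≤ m)
    (β : ℝ) (hβ0 : 0 < β) (hβ1 : β < 1)
    (Φ : (Fin n → ℝ) → ℝ)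
    (hΦ : ∀ y : Fin n → ℝ,
      Φ y = ∑ i, (y i * Real.arsinh (y i / β) - Real.sqrt ((y i) ^ 2 + β ^ 2)))
    (xs : Fin n → ℝ) (hxs : ∑ i, (xs i) ^ 2 = 1)
    (i₀ : Fin n) (hi₀ : 0 < xs i₀)
    (θ : ℝ)
    (hθ1 : Real.sqrt (1 - 9 * Real.sqrt (Real.log n / m)) ≤ θ)
    (hθ2 : θ ≤ Real.sqrt (1 + 9 * Real.sqrt (Real.log n / m)))
    (hθ3 : θ ≤ Real.sqrt 2)
    (X0 : Fin n → ℝ)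
    (hX0 : ∀ i, X0 i = if i = i₀ then θ / Real.sqrt 3 else 0) :
    Φ xs - Φ X0 - fderiv ℝ Φ X0 (fun i => xs i - X0 i) ≤
      (∑ i, |xs i|) * Real.log (1 / β) + 1 := by
  have hΦeq : Φ = fun y : Fin n → ℝ =>
      ∑ i, (y i * Real.arsinh (y i / β) - Real.sqrt ((y i) ^ 2 + β ^ 2)) := funext hΦ
  subst hΦeq
  set a : ℝ := θ / Real.sqrt 3 with hadef
  have hs3 : (0:ℝ) < Real.sqrt 3 := Real.sqrt_pos.2 (by norm_num)
  have hθ0 : 0 ≤ θ := le_trans (Real.sqrt_nonneg _) hθ1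
  have ha0 : 0 ≤ a := div_nonneg hθ0 hs3.le
  have ha2 : a^2 ≤ 2/3 := by
    have h2 : θ^2 ≤ 2 := by
      nlinarith [Real.sq_sqrt (by norm_num : (0:ℝ) ≤ 2), Real.sqrt_nonneg 2]
    have h3 : (Real.sqrt 3)^2 = 3 := Real.sq_sqrt (by norm_num)
    rw [hadef, div_pow, h3]; linarith
  set q : ℝ := Real.sqrt (a^2+β^2) with hqdef
  have hq0 : 0 ≤ q := Real.sqrt_nonneg _
  have hqβ : β ≤ q := by
    rw [hqdef, show a^2+β^2 = β^2 + a^2 by ring]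
    calc β = Real.sqrt (β^2) := (Real.sqrt_sq hβ0.le).symm
    _ ≤ _ := Real.sqrt_le_sqrt (by nlinarith)
  set ar : ℝ := Real.arsinh (a/β) with hardef
  have har : 0 ≤ ar := Real.arsinh_nonneg_iff.mpr (div_nonneg ha0 hβ0.le)
  -- derivative
  have hF : HasFDerivAt (fun y : Fin n → ℝ =>
        ∑ i, (y i * Real.arsinh (y i / β) - Real.sqrt ((y i) ^ 2 + β ^ 2)))
      (∑ i, Real.arsinh (X0 i / β) • (ContinuousLinearMap.proj i : (Fin n → ℝ) →L[ℝ] ℝ)) X0 := by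
    apply HasFDerivAt.fun_sum
    intro i _
    exact (ibb_hasDerivAt β hβ0 (X0 i)).comp_hasFDerivAt X0
      ((ContinuousLinearMap.proj i : (Fin n → ℝ) →L[ℝ] ℝ)).hasFDerivAt
  have hfder : fderiv ℝ (fun y : Fin n → ℝ =>
        ∑ i, (y i * Real.arsinh (y i / β) - Real.sqrt ((y i) ^ 2 + β ^ 2))) X0
        (fun i => xs i - X0 i) = ar * (xs i₀ - a) := by
    rw [hF.fderiv, ContinuousLinearMap.sum_apply]
    rw [Finset.sum_eq_single i₀]
    · simp [hX0, smul_eq_mul, hardef]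
    · intro i _ hi
      rw [hX0 i, if_neg hi]
      simp
    · intro h
      exact absurd (Finset.mem_univ i₀) h
  rw [hfder]
  beta_reduce
  -- rewrite sums with +β
  have e1 : ∑ i, (xs i * Real.arsinh (xs i / β) - Real.sqrt ((xs i) ^ 2 + β ^ 2))
      = (∑ i, (xs i * Real.arsinh (xs i / β) - Real.sqrt ((xs i) ^ 2 + β ^ 2) + β)) - n*β := by
    rw [Finset.sum_add_distrib]
    simp [Finset.card_univ]
  have e2 : ∑ i, (X0 i * Real.arsinh (X0 i / β) - Real.sqrt ((X0 i) ^ 2 + β ^ 2))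
      = (a * ar - q + β) - n*β := by
    have e2' : ∑ i, (X0 i * Real.arsinh (X0 i / β) - Real.sqrt ((X0 i) ^ 2 + β ^ 2) + β)
        = a * ar - q + β := by
      rw [Finset.sum_eq_single i₀]
      · rw [hX0 i₀, if_pos rfl]
      · intro i _ hi
        rw [hX0 i, if_neg hi]
        simp [Real.sqrt_sq hβ0.le]
      · intro h
        exact absurd (Finset.mem_univ i₀) h
    calc ∑ i, (X0 i * Real.arsinh (X0 i / β) - Real.sqrt ((X0 i) ^ 2 + β ^ 2))
        = (∑ i, (X0 i * Real.arsinh (X0 i / β) - Real.sqrt ((X0 i) ^ 2 + β ^ 2) + β)) - n*β := by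
          rw [Finset.sum_add_distrib]; simp [Finset.card_univ]
      _ = (a * ar - q + β) - n*β := by rw [e2']
  rw [e1, e2]
  -- coordinate facts
  have hx2 : ∀ i, (xs i)^2 ≤ 1 := by
    intro i
    have h := Finset.single_le_sum (f := fun j => (xs j)^2) (fun j _ => sq_nonneg _)
      (Finset.mem_univ i)
    rw [hxs] at h
    exact h
  have habs : ∀ i, |xs i| ≤ 1 := fun i => (sq_le_one_iff_abs_le_one (xs i)).mp (hx2 i)
  have hl1 : 1 ≤ ∑ i, |xs i| := by
    rw [← hxs]
    apply Finset.sum_le_sum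
    intro i _
    calc (xs i)^2 = |xs i|^2 := (sq_abs _).symm
    _ ≤ |xs i| := by nlinarith [abs_nonneg (xs i), habs i]
  have hx0le : xs i₀ * ar ≥ 0 := mul_nonneg hi₀.le har
  rcases le_or_gt (a^2+β^2) 1 with hreg | hreg
  · -- regime 1
    have hq1 : q ≤ 1 := by
      rw [hqdef, show (1:ℝ) = Real.sqrt 1 from (Real.sqrt_one).symm]
      exact Real.sqrt_le_sqrt hreg
    have hsum : ∑ i, (xs i * Real.arsinh (xs i / β) - Real.sqrt ((xs i) ^ 2 + β ^ 2) + β)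
        ≤ (∑ i, |xs i|) * Real.log (1/β) + (1 - (1-β)*(∑ i, |xs i|)) := by
      calc ∑ i, (xs i * Real.arsinh (xs i / β) - Real.sqrt ((xs i) ^ 2 + β ^ 2) + β)
          ≤ ∑ i, (|xs i| * Real.log (1/β) + ((xs i)^2 - (1-β)*|xs i|)) := by
            apply Finset.sum_le_sum
            intro i _
            exact ibb_boundA β (xs i) hβ0 hβ1.le (habs i)
        _ = (∑ i, |xs i|) * Real.log (1/β) + ((∑ i, (xs i)^2) - (1-β)*(∑ i, |xs i|)) := by
            rw [Finset.sum_add_distrib, Finset.sum_sub_distrib, ← Finset.sum_mul,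
              Finset.mul_sum]
        _ = (∑ i, |xs i|) * Real.log (1/β) + (1 - (1-β)*(∑ i, |xs i|)) := by rw [hxs]
    have hS : (1-β)*1 ≤ (1-β)*(∑ i, |xs i|) :=
      mul_le_mul_of_nonneg_left hl1 (by linarith)
    linarith
  · -- regime 2
    have hβ3 : 1/3 ≤ β^2 := by linarith
    set c : ℝ := Real.sqrt 3 / 3 with hcdef
    have hc2 : c^2 = 1/3 := by
      rw [hcdef, div_pow, Real.sq_sqrt (by norm_num : (0:ℝ) ≤ 3)]
      norm_num
    have hc0 : 0 < c := by positivity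
    have hcub : c ≤ (578:ℝ)/1000 := by nlinarith
    have hβc : c ≤ β := by nlinarith
    have hqle : q ≤ 1 - c + β := by
      rw [hqdef, show (1:ℝ) - c + β = Real.sqrt ((1-c+β)^2) from
        (Real.sqrt_sq (by linarith)).symm]
      apply Real.sqrt_le_sqrt
      nlinarith [mul_nonneg (by linarith : (0:ℝ) ≤ 1 - c) (by linarith : (0:ℝ) ≤ β - c)]
    have hsum : ∑ i, (xs i * Real.arsinh (xs i / β) - Real.sqrt ((xs i) ^ 2 + β ^ 2) + β)
        ≤ (∑ i, |xs i|) * Real.log (1/β) + c := by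
      calc ∑ i, (xs i * Real.arsinh (xs i / β) - Real.sqrt ((xs i) ^ 2 + β ^ 2) + β)
          ≤ ∑ i, (|xs i| * Real.log (1/β) + (xs i)^2 * c) := by
            apply Finset.sum_le_sum
            intro i _
            exact ibb_boundB β (xs i) hβ0 hβ1.le hβ3 (habs i)
        _ = (∑ i, |xs i|) * Real.log (1/β) + (∑ i, (xs i)^2) * c := by
            rw [Finset.sum_add_distrib, ← Finset.sum_mul, ← Finset.sum_mul]
        _ = (∑ i, |xs i|) * Real.log (1/β) + c := by rw [hxs]; ring
    linarith
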